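/- arXiv:2005.08369 — 3 statements merged into one kernel-verified Lean document; each statement's English description precedes it below -/
import Mathlib

section
/- Let F, G : J → ℝ be differentiable satisfying the symmetric equation [F(b)−F(a)]G'((a+b)/2) = [G(b)−G(a)]F'((a+b)/2) for all a, b ∈ J. If on some connected component I of U_g = {G' ≠ 0}, F and G both lie in span{1, e^{μx}, e^{−μx}} for some μ > 0 (with {1,F,G} linearly independent on I), then F, G ∈ span{1, e^{μx}, e^{−μx}} on all of J; similarly for span{1, sin(μx), cos(μx)}. -/
private lemma wronskian_zero (u' v' u'' v'' : ℝ → ℝ)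
    (hu' : ∀ x, HasDerivAt u' (u'' x) x) (hv' : ∀ x, HasDerivAt v' (v'' x) x)
    (hW : ∀ m, u' m * v'' m - v' m * u'' m ≠ 0)
    (A B p q : ℝ) (hpq : p < q)
    (h0 : ∀ m ∈ Set.Ioo p q, A * u' m + B * v' m = 0) : A = 0 ∧ B = 0 := by
  set m := (p + q) / 2 with hm
  have hmm : m ∈ Set.Ioo p q := ⟨by rw [hm]; linarith, by rw [hm]; linarith⟩
  have hd : HasDerivAt (fun y => A * u' y + B * v' y) (A * u'' m + B * v'' m) m :=
    ((hu' m).const_mul A).add ((hv' m).const_mul B)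
  have hz : (fun y => A * u' y + B * v' y) =ᶠ[nhds m] fun _ => (0:ℝ) :=
    Filter.eventuallyEq_of_mem (Ioo_mem_nhds hmm.1 hmm.2) (fun y hy => h0 y hy)
  have hd0 : HasDerivAt (fun y => A * u' y + B * v' y) 0 m :=
    (hasDerivAt_const m (0:ℝ)).congr_of_eventuallyEq hz
  have h2 : A * u'' m + B * v'' m = 0 := hd.unique hd0
  have h1 : A * u' m + B * v' m = 0 := h0 m hmm
  constructor
  · have hA : A * (u' m * v'' m - v' m * u'' m) = 0 := by
      linear_combination v'' m * h1 - v' m * h2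
    exact (mul_eq_zero.mp hA).resolve_right (hW m)
  · have hB : B * (u' m * v'' m - v' m * u'' m) = 0 := by
      linear_combination u' m * h2 - u'' m * h1
    exact (mul_eq_zero.mp hB).resolve_right (hW m)

private lemma refl_step
    (J : Set ℝ) (F G f g u v u' v' u'' v'' : ℝ → ℝ)
    (hF : ∀ x ∈ J, HasDerivAt F (f x) x) (hG : ∀ x ∈ J, HasDerivAt G (g x) x)
    (heq : ∀ a ∈ J, ∀ b ∈ J,
      (F b - F a) * g ((a + b) / 2) = (G b - G a) * f ((a + b) / 2))
    (hu : ∀ x, HasDerivAt u (u' x) x) (hv : ∀ x, HasDerivAt v (v' x) x)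
    (hu' : ∀ x, HasDerivAt u' (u'' x) x) (hv' : ∀ x, HasDerivAt v' (v'' x) x)
    (hsym : ∀ m x, u (2*m - x) * v' m - v (2*m - x) * u' m = u x * v' m - v x * u' m)
    (hW : ∀ m, u' m * v'' m - v' m * u'' m ≠ 0)
    (aF bF cF aG bG cG : ℝ) (hdet : bF * cG - cF * bG ≠ 0)
    (x : ℝ) (hx : x ∈ J) (p q : ℝ) (hpq : p < q) (hpqJ : Set.Ioo p q ⊆ J)
    (hknF : ∀ y ∈ Set.Ioo p q, F y = aF + bF * u y + cF * v y)
    (hknG : ∀ y ∈ Set.Ioo p q, G y = aG + bG * u y + cG * v y)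
    (hrJ : ∀ m ∈ Set.Ioo p q, 2*m - x ∈ J)
    (hrF : ∀ m ∈ Set.Ioo p q, F (2*m - x) = aF + bF * u (2*m - x) + cF * v (2*m - x))
    (hrG : ∀ m ∈ Set.Ioo p q, G (2*m - x) = aG + bG * u (2*m - x) + cG * v (2*m - x)) :
    F x = aF + bF * u x + cF * v x ∧ G x = aG + bG * u x + cG * v x := by
  have hfm : ∀ m ∈ Set.Ioo p q, f m = bF * u' m + cF * v' m := by
    intro m hm
    have h2 : HasDerivAt (fun y => aF + bF * u y + cF * v y) (bF * u' m + cF * v' m) m := by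
      simpa [Pi.add_def] using ((hasDerivAt_const m aF).add ((hu m).const_mul bF)).add ((hv m).const_mul cF)
    have heqn : F =ᶠ[nhds m] fun y => aF + bF * u y + cF * v y :=
      Filter.eventuallyEq_of_mem (Ioo_mem_nhds hm.1 hm.2) (fun y hy => hknF y hy)
    exact (hF m (hpqJ hm)).unique (h2.congr_of_eventuallyEq heqn)
  have hgm : ∀ m ∈ Set.Ioo p q, g m = bG * u' m + cG * v' m := by
    intro m hm
    have h2 : HasDerivAt (fun y => aG + bG * u y + cG * v y) (bG * u' m + cG * v' m) m := by
      simpa [Pi.add_def] using ((hasDerivAt_const m aG).add ((hu m).const_mul bG)).add ((hv m).const_mul cG)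
    have heqn : G =ᶠ[nhds m] fun y => aG + bG * u y + cG * v y :=
      Filter.eventuallyEq_of_mem (Ioo_mem_nhds hm.1 hm.2) (fun y hy => hknG y hy)
    exact (hG m (hpqJ hm)).unique (h2.congr_of_eventuallyEq heqn)
  have hlin : ∀ m ∈ Set.Ioo p q,
      ((F x - (aF + bF * u x + cF * v x)) * bG - (G x - (aG + bG * u x + cG * v x)) * bF) * u' m
      + ((F x - (aF + bF * u x + cF * v x)) * cG - (G x - (aG + bG * u x + cG * v x)) * cF) * v' m
      = 0 := by
    intro m hm
    have E := heq x hx (2*m - x) (hrJ m hm)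
    have hmid : (x + (2*m - x)) / 2 = m := by ring
    rw [hmid, hrF m hm, hrG m hm, hfm m hm, hgm m hm] at E
    linear_combination (bF * cG - cF * bG) * hsym m x - E
  obtain ⟨h1, h2⟩ := wronskian_zero u' v' u'' v'' hu' hv' hW _ _ p q hpq hlin
  constructor
  · have hD1 : (F x - (aF + bF * u x + cF * v x)) * (bF * cG - cF * bG) = 0 := by
      linear_combination bF * h2 - cF * h1
    have := (mul_eq_zero.mp hD1).resolve_right hdet
    linarith
  · have hD2 : (G x - (aG + bG * u x + cG * v x)) * (bF * cG - cF * bG) = 0 := by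
      linear_combination bG * h2 - cG * h1
    have := (mul_eq_zero.mp hD2).resolve_right hdet
    linarith

private lemma extend
    (J : Set ℝ) (hJc : J.OrdConnected)
    (F G f g u v u' v' u'' v'' : ℝ → ℝ)
    (hF : ∀ x ∈ J, HasDerivAt F (f x) x) (hG : ∀ x ∈ J, HasDerivAt G (g x) x)
    (heq : ∀ a ∈ J, ∀ b ∈ J,
      (F b - F a) * g ((a + b) / 2) = (G b - G a) * f ((a + b) / 2))
    (hu : ∀ x, HasDerivAt u (u' x) x) (hv : ∀ x, HasDerivAt v (v' x) x)
    (hu' : ∀ x, HasDerivAt u' (u'' x) x) (hv' : ∀ x, HasDerivAt v' (v'' x) x)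
    (hsym : ∀ m x, u (2*m - x) * v' m - v (2*m - x) * u' m = u x * v' m - v x * u' m)
    (hW : ∀ m, u' m * v'' m - v' m * u'' m ≠ 0)
    (aF bF cF aG bG cG : ℝ) (hdet : bF * cG - cF * bG ≠ 0)
    (s t : ℝ) (hst : s < t) (hsubJ : Set.Ioo s t ⊆ J)
    (hFI : ∀ x ∈ Set.Ioo s t, F x = aF + bF * u x + cF * v x)
    (hGI : ∀ x ∈ Set.Ioo s t, G x = aG + bG * u x + cG * v x) :
    ∀ x ∈ J, F x = aF + bF * u x + cF * v x ∧ G x = aG + bG * u x + cG * v x := by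
  have hδ : (0:ℝ) < (t - s) / 4 := by linarith
  have hm₀J : (s + t) / 2 ∈ J := hsubJ ⟨by linarith, by linarith⟩
  have main : ∀ n : ℕ, ∀ x ∈ J, |x - (s + t) / 2| < ((n:ℝ) + 1) * ((t - s) / 4) →
      (F x = aF + bF * u x + cF * v x ∧ G x = aG + bG * u x + cG * v x) := by
    intro n
    induction n with
    | zero =>
      intro x hx hlt
      rw [abs_lt] at hlt
      push_cast at hlt
      have hxI : x ∈ Set.Ioo s t := ⟨by linarith [hlt.1], by linarith [hlt.2]⟩
      exact ⟨hFI x hxI, hGI x hxI⟩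
    | succ n ih =>
      intro x hx hlt
      push_cast at hlt
      by_cases hsm : |x - (s + t) / 2| < ((n:ℝ) + 1) * ((t - s) / 4)
      · exact ih x hx hsm
      push_neg at hsm
      have hn0 : (0:ℝ) ≤ (n:ℝ) := Nat.cast_nonneg n
      have hnd : (0:ℝ) ≤ (n:ℝ) * ((t - s) / 4) := mul_nonneg hn0 (le_of_lt hδ)
      rcases le_total ((s + t) / 2) x with hxm | hxm
      · have hξ1 : ((n:ℝ) + 1) * ((t - s) / 4) ≤ x - (s + t) / 2 := by
          rwa [abs_of_nonneg (by linarith)] at hsm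
        have hξ2 : x - (s + t) / 2 < ((n:ℝ) + 1 + 1) * ((t - s) / 4) := by
          rwa [abs_of_nonneg (by linarith)] at hlt
        refine refl_step J F G f g u v u' v' u'' v'' hF hG heq hu hv hu' hv' hsym hW
          aF bF cF aG bG cG hdet x hx
          ((s + t) / 2 + (x - (s + t) / 2) / 2 - (t - s) / 16)
          ((s + t) / 2 + (x - (s + t) / 2) / 2)
          (by linarith) ?_ ?_ ?_ ?_ ?_ ?_
        · intro m hm
          obtain ⟨hm1, hm2⟩ := hm
          exact hJc.out hm₀J hx ⟨by linarith, by linarith⟩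
        · intro y hy
          obtain ⟨hy1, hy2⟩ := hy
          refine (ih y (hJc.out hm₀J hx ⟨by linarith, by linarith⟩) ?_).1
          rw [abs_lt]
          constructor <;> linarith
        · intro y hy
          obtain ⟨hy1, hy2⟩ := hy
          refine (ih y (hJc.out hm₀J hx ⟨by linarith, by linarith⟩) ?_).2
          rw [abs_lt]
          constructor <;> linarith
        · intro m hm
          obtain ⟨hm1, hm2⟩ := hm
          exact hsubJ ⟨by linarith, by linarith⟩
        · intro m hm
          obtain ⟨hm1, hm2⟩ := hm
          exact hFI _ ⟨by linarith, by linarith⟩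
        · intro m hm
          obtain ⟨hm1, hm2⟩ := hm
          exact hGI _ ⟨by linarith, by linarith⟩
      · have hξ1 : ((n:ℝ) + 1) * ((t - s) / 4) ≤ (s + t) / 2 - x := by
          rw [abs_of_nonpos (by linarith)] at hsm
          linarith
        have hξ2 : (s + t) / 2 - x < ((n:ℝ) + 1 + 1) * ((t - s) / 4) := by
          rw [abs_of_nonpos (by linarith)] at hlt
          linarith
        refine refl_step J F G f g u v u' v' u'' v'' hF hG heq hu hv hu' hv' hsym hW
          aF bF cF aG bG cG hdet x hx
          ((s + t) / 2 + (x - (s + t) / 2) / 2)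
          ((s + t) / 2 + (x - (s + t) / 2) / 2 + (t - s) / 16)
          (by linarith) ?_ ?_ ?_ ?_ ?_ ?_
        · intro m hm
          obtain ⟨hm1, hm2⟩ := hm
          exact hJc.out hx hm₀J ⟨by linarith, by linarith⟩
        · intro y hy
          obtain ⟨hy1, hy2⟩ := hy
          refine (ih y (hJc.out hx hm₀J ⟨by linarith, by linarith⟩) ?_).1
          rw [abs_lt]
          constructor <;> linarith
        · intro y hy
          obtain ⟨hy1, hy2⟩ := hy
          refine (ih y (hJc.out hx hm₀J ⟨by linarith, by linarith⟩) ?_).2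
          rw [abs_lt]
          constructor <;> linarith
        · intro m hm
          obtain ⟨hm1, hm2⟩ := hm
          exact hsubJ ⟨by linarith, by linarith⟩
        · intro m hm
          obtain ⟨hm1, hm2⟩ := hm
          exact hFI _ ⟨by linarith, by linarith⟩
        · intro m hm
          obtain ⟨hm1, hm2⟩ := hm
          exact hGI _ ⟨by linarith, by linarith⟩
  intro x hx
  obtain ⟨n, hn⟩ := exists_nat_gt (|x - (s + t) / 2| / ((t - s) / 4))
  have h1 : |x - (s + t) / 2| < (n:ℝ) * ((t - s) / 4) := by
    rwa [div_lt_iff₀ hδ] at hn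
  exact main n x hx (by linarith)

private lemma case_lemma
    (J : Set ℝ) (hJc : J.OrdConnected)
    (F G f g : ℝ → ℝ)
    (hF : ∀ x ∈ J, HasDerivAt F (f x) x) (hG : ∀ x ∈ J, HasDerivAt G (g x) x)
    (heq : ∀ a ∈ J, ∀ b ∈ J,
      (F b - F a) * g ((a + b) / 2) = (G b - G a) * f ((a + b) / 2))
    (I : Set ℝ) (x₀ : ℝ) (hx₀ : x₀ ∈ {x ∈ J | g x ≠ 0})
    (hI : I = connectedComponentIn {x ∈ J | g x ≠ 0} x₀)
    (hindep : ¬ ∃ c₁ c₂ c₃ : ℝ, (c₁, c₂, c₃) ≠ (0, 0, 0) ∧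
        ∀ x ∈ I, c₁ * F x + c₂ * G x + c₃ = 0)
    (u v u' v' u'' v'' : ℝ → ℝ)
    (hu : ∀ x, HasDerivAt u (u' x) x) (hv : ∀ x, HasDerivAt v (v' x) x)
    (hu' : ∀ x, HasDerivAt u' (u'' x) x) (hv' : ∀ x, HasDerivAt v' (v'' x) x)
    (hsym : ∀ m x, u (2*m - x) * v' m - v (2*m - x) * u' m = u x * v' m - v x * u' m)
    (hW : ∀ m, u' m * v'' m - v' m * u'' m ≠ 0)
    (aF bF cF aG bG cG : ℝ)
    (hEF : ∀ x ∈ I, F x = aF + bF * u x + cF * v x)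
    (hEG : ∀ x ∈ I, G x = aG + bG * u x + cG * v x) :
    (∀ x ∈ J, F x = aF + bF * u x + cF * v x) ∧
    (∀ x ∈ J, G x = aG + bG * u x + cG * v x) := by
  have hIU : I ⊆ {x ∈ J | g x ≠ 0} := by rw [hI]; exact connectedComponentIn_subset _ _
  have hx₀I : x₀ ∈ I := by rw [hI]; exact mem_connectedComponentIn hx₀
  have hIpc : IsPreconnected I := by rw [hI]; exact isPreconnected_connectedComponentIn
  have hIord : I.OrdConnected := hIpc.ordConnected
  obtain ⟨s, t, hst, hstI⟩ : ∃ s t : ℝ, s < t ∧ Set.Ioo s t ⊆ I := by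
    by_cases hy : ∃ y ∈ I, y ≠ x₀
    · obtain ⟨y, hyI, hyne⟩ := hy
      refine ⟨min y x₀, max y x₀, min_lt_max.mpr hyne, ?_⟩
      have h1 : min y x₀ ∈ I := by
        rcases le_total y x₀ with h | h
        · rwa [min_eq_left h]
        · rwa [min_eq_right h]
      have h2 : max y x₀ ∈ I := by
        rcases le_total y x₀ with h | h
        · rwa [max_eq_right h]
        · rwa [max_eq_left h]
      exact fun z hz => hIord.out h1 h2 ⟨le_of_lt hz.1, le_of_lt hz.2⟩
    · exfalso
      push_neg at hy
      exact hindep ⟨1, 0, -F x₀, by simp, fun x hxI => by rw [hy x hxI]; ring⟩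
  have hstJ : Set.Ioo s t ⊆ J := fun z hz => (hIU (hstI hz)).1
  have hFI : ∀ x ∈ Set.Ioo s t, F x = aF + bF * u x + cF * v x :=
    fun x hx => hEF x (hstI hx)
  have hGI : ∀ x ∈ Set.Ioo s t, G x = aG + bG * u x + cG * v x :=
    fun x hx => hEG x (hstI hx)
  have hgm : ∀ m ∈ Set.Ioo s t, g m = bG * u' m + cG * v' m := by
    intro m hm
    have h2 : HasDerivAt (fun y => aG + bG * u y + cG * v y) (bG * u' m + cG * v' m) m := by
      simpa [Pi.add_def] using ((hasDerivAt_const m aG).add ((hu m).const_mul bG)).add ((hv m).const_mul cG)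
    have heqn : G =ᶠ[nhds m] fun y => aG + bG * u y + cG * v y :=
      Filter.eventuallyEq_of_mem (Ioo_mem_nhds hm.1 hm.2) (fun y hy => hGI y hy)
    exact (hG m (hstJ hm)).unique (h2.congr_of_eventuallyEq heqn)
  have hm₀ : (s + t) / 2 ∈ Set.Ioo s t := ⟨by linarith, by linarith⟩
  have hbc : ¬ (bG = 0 ∧ cG = 0) := by
    rintro ⟨h1, h2⟩
    have hz := hgm _ hm₀
    rw [h1, h2] at hz
    simp at hz
    exact (hIU (hstI hm₀)).2 hz
  have hdet : bF * cG - cF * bG ≠ 0 := by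
    intro h0
    rcases eq_or_ne bG 0 with hb | hb
    · have hcG : cG ≠ 0 := fun h => hbc ⟨hb, h⟩
      have hbF : bF = 0 := by
        have hz : bF * cG = 0 := by rw [hb] at h0; linarith
        exact (mul_eq_zero.mp hz).resolve_right hcG
      refine hindep ⟨1, -(cF / cG), (cF / cG) * aG - aF, by simp, fun x hx => ?_⟩
      rw [hEF x hx, hEG x hx, hbF, hb]
      field_simp
      ring
    · refine hindep ⟨1, -(bF / bG), (bF / bG) * aG - aF, by simp, fun x hx => ?_⟩
      rw [hEF x hx, hEG x hx]
      field_simp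
      linear_combination (-(v x)) * h0
  have hext := extend J hJc F G f g u v u' v' u'' v'' hF hG heq hu hv hu' hv' hsym hW
    aF bF cF aG bG cG hdet s t hst hstJ hFI hGI
  exact ⟨fun x hx => (hext x hx).1, fun x hx => (hext x hx).2⟩

/-- Lemma 5.3, exponential and trigonometric cases -/
theorem stmt_15 (J : Set ℝ) (hJo : IsOpen J) (hJc : J.OrdConnected) (hJne : J.Nonempty)
    (F G f g : ℝ → ℝ)
    (hF : ∀ x ∈ J, HasDerivAt F (f x) x) (hG : ∀ x ∈ J, HasDerivAt G (g x) x)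
    (heq : ∀ a ∈ J, ∀ b ∈ J,
      (F b - F a) * g ((a + b) / 2) = (G b - G a) * f ((a + b) / 2))
    (I : Set ℝ) (x₀ : ℝ) (hx₀ : x₀ ∈ {x ∈ J | g x ≠ 0})
    (hI : I = connectedComponentIn {x ∈ J | g x ≠ 0} x₀)
    (hindep : ¬ ∃ c₁ c₂ c₃ : ℝ, (c₁, c₂, c₃) ≠ (0, 0, 0) ∧
        ∀ x ∈ I, c₁ * F x + c₂ * G x + c₃ = 0)
    (μ : ℝ) (hμ : 0 < μ) :
    ((∃ a b c : ℝ, ∀ x ∈ I,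
        F x = a + b * Real.exp (μ * x) + c * Real.exp (-(μ * x))) →
     (∃ a b c : ℝ, ∀ x ∈ I,
        G x = a + b * Real.exp (μ * x) + c * Real.exp (-(μ * x))) →
     (∃ a b c : ℝ, ∀ x ∈ J,
        F x = a + b * Real.exp (μ * x) + c * Real.exp (-(μ * x))) ∧
     (∃ a b c : ℝ, ∀ x ∈ J,
        G x = a + b * Real.exp (μ * x) + c * Real.exp (-(μ * x)))) ∧
    ((∃ a b c : ℝ, ∀ x ∈ I,
        F x = a + b * Real.sin (μ * x) + c * Real.cos (μ * x)) →
     (∃ a b c : ℝ, ∀ x ∈ I,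
        G x = a + b * Real.sin (μ * x) + c * Real.cos (μ * x)) →
     (∃ a b c : ℝ, ∀ x ∈ J,
        F x = a + b * Real.sin (μ * x) + c * Real.cos (μ * x)) ∧
     (∃ a b c : ℝ, ∀ x ∈ J,
        G x = a + b * Real.sin (μ * x) + c * Real.cos (μ * x))) := by
  have hlin : ∀ x : ℝ, HasDerivAt (fun y : ℝ => μ * y) μ x := fun x => by
    simpa using (hasDerivAt_id x).const_mul μ
  constructor
  · -- exponential case
    rintro ⟨aF, bF, cF, hEF⟩ ⟨aG, bG, cG, hEG⟩
    have hu : ∀ x, HasDerivAt (fun y => Real.exp (μ * y)) (Real.exp (μ * x) * μ) x :=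
      fun x => (hlin x).exp
    have hv : ∀ x, HasDerivAt (fun y => Real.exp (-(μ * y))) (Real.exp (-(μ * x)) * -μ) x :=
      fun x => ((hlin x).neg).exp
    have hu' : ∀ x, HasDerivAt (fun y => Real.exp (μ * y) * μ) (Real.exp (μ * x) * μ * μ) x :=
      fun x => (hu x).mul_const μ
    have hv' : ∀ x, HasDerivAt (fun y => Real.exp (-(μ * y)) * -μ)
        (Real.exp (-(μ * x)) * -μ * -μ) x := fun x => (hv x).mul_const (-μ)
    have hsymE : ∀ m x : ℝ,
        Real.exp (μ * (2*m - x)) * (Real.exp (-(μ * m)) * -μ)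
          - Real.exp (-(μ * (2*m - x))) * (Real.exp (μ * m) * μ)
        = Real.exp (μ * x) * (Real.exp (-(μ * m)) * -μ)
          - Real.exp (-(μ * x)) * (Real.exp (μ * m) * μ) := by
      intro m x
      rw [Real.exp_neg (μ * (2*m - x)), Real.exp_neg (μ * m), Real.exp_neg (μ * x)]
      have h2 : Real.exp (μ * (2*m - x))
          = Real.exp (μ * m) * Real.exp (μ * m) * (Real.exp (μ * x))⁻¹ := by
        rw [← Real.exp_neg, ← Real.exp_add, ← Real.exp_add]
        congr 1
        ring
      rw [h2]
      have e1 := Real.exp_ne_zero (μ * m)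
      have e2 := Real.exp_ne_zero (μ * x)
      field_simp
      ring
    have hWE : ∀ m : ℝ,
        Real.exp (μ * m) * μ * (Real.exp (-(μ * m)) * -μ * -μ)
          - Real.exp (-(μ * m)) * -μ * (Real.exp (μ * m) * μ * μ) ≠ 0 := by
      intro m
      have h1 : Real.exp (μ * m) * Real.exp (-(μ * m)) = 1 := by
        rw [← Real.exp_add, show μ * m + -(μ * m) = 0 from by ring, Real.exp_zero]
      have h2 : Real.exp (μ * m) * μ * (Real.exp (-(μ * m)) * -μ * -μ)
          - Real.exp (-(μ * m)) * -μ * (Real.exp (μ * m) * μ * μ) = 2 * μ ^ 3 := by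
        linear_combination (2 * μ ^ 3) * h1
      rw [h2]
      have : (0:ℝ) < 2 * μ ^ 3 := by positivity
      exact this.ne'
    have h := case_lemma J hJc F G f g hF hG heq I x₀ hx₀ hI hindep
      (fun y => Real.exp (μ * y)) (fun y => Real.exp (-(μ * y)))
      (fun x => Real.exp (μ * x) * μ) (fun x => Real.exp (-(μ * x)) * -μ)
      (fun x => Real.exp (μ * x) * μ * μ) (fun x => Real.exp (-(μ * x)) * -μ * -μ)
      hu hv hu' hv' hsymE hWE aF bF cF aG bG cG hEF hEG
    exact ⟨⟨aF, bF, cF, h.1⟩, ⟨aG, bG, cG, h.2⟩⟩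
  · -- trigonometric case
    rintro ⟨aF, bF, cF, hEF⟩ ⟨aG, bG, cG, hEG⟩
    have hu : ∀ x, HasDerivAt (fun y => Real.sin (μ * y)) (Real.cos (μ * x) * μ) x :=
      fun x => (hlin x).sin
    have hv : ∀ x, HasDerivAt (fun y => Real.cos (μ * y)) (-Real.sin (μ * x) * μ) x :=
      fun x => (hlin x).cos
    have hu' : ∀ x, HasDerivAt (fun y => Real.cos (μ * y) * μ) (-Real.sin (μ * x) * μ * μ) x :=
      fun x => ((hlin x).cos).mul_const μ
    have hv' : ∀ x, HasDerivAt (fun y => -Real.sin (μ * y) * μ)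
        (-(Real.cos (μ * x) * μ) * μ) x := fun x => (((hlin x).sin).neg).mul_const μ
    have hsymT : ∀ m x : ℝ,
        Real.sin (μ * (2*m - x)) * (-Real.sin (μ * m) * μ)
          - Real.cos (μ * (2*m - x)) * (Real.cos (μ * m) * μ)
        = Real.sin (μ * x) * (-Real.sin (μ * m) * μ)
          - Real.cos (μ * x) * (Real.cos (μ * m) * μ) := by
      intro m x
      rw [show μ * (2*m - x) = μ * m + (μ * m - μ * x) from by ring,
        Real.sin_add, Real.cos_add, Real.sin_sub, Real.cos_sub]
      linear_combination (-μ * (Real.cos (μ * m) * Real.cos (μ * x)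
        + Real.sin (μ * m) * Real.sin (μ * x))) * Real.sin_sq_add_cos_sq (μ * m)
    have hWT : ∀ m : ℝ,
        Real.cos (μ * m) * μ * (-(Real.cos (μ * m) * μ) * μ)
          - -Real.sin (μ * m) * μ * (-Real.sin (μ * m) * μ * μ) ≠ 0 := by
      intro m
      have h2 : Real.cos (μ * m) * μ * (-(Real.cos (μ * m) * μ) * μ)
          - -Real.sin (μ * m) * μ * (-Real.sin (μ * m) * μ * μ) = -(μ ^ 3) := by
        linear_combination (-(μ ^ 3)) * Real.sin_sq_add_cos_sq (μ * m)
      rw [h2]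
      have : (0:ℝ) < μ ^ 3 := by positivity
      exact (neg_ne_zero.mpr this.ne')
    have h := case_lemma J hJc F G f g hF hG heq I x₀ hx₀ hI hindep
      (fun y => Real.sin (μ * y)) (fun y => Real.cos (μ * y))
      (fun x => Real.cos (μ * x) * μ) (fun x => -Real.sin (μ * x) * μ)
      (fun x => -Real.sin (μ * x) * μ * μ) (fun x => -(Real.cos (μ * x) * μ) * μ)
      hu hv hu' hv' hsymT hWT aF bF cF aG bG cG hEF hEG
    exact ⟨⟨aF, bF, cF, h.1⟩, ⟨aG, bG, cG, h.2⟩⟩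
end

section
/- Let E ⊆ ℝ be open, H : E → ℝ differentiable strictly monotone, h(x,y) = H⁻¹((H(x)+H(y))/2), and μ ≠ 0 a real number. Then any pair φ, ψ ∈ span{1, e^{μH}, e^{−μH}} satisfies [φ(y)−φ(x)]ψ'(h(x,y)) = [ψ(y)−ψ(x)]φ'(h(x,y)) for all x < y in E. (Verification that case (c) of the main theorem gives solutions.) -/
/-- Case (c) of the main theorem gives solutions. -/
theorem stmt_17 (E : Set ℝ) (hEo : IsOpen E) (hEc : E.OrdConnected) (hEne : E.Nonempty)
    (H Hinv : ℝ → ℝ)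
    (hH : ∀ x ∈ E, DifferentiableAt ℝ H x)
    (hHmono : StrictMonoOn H E ∨ StrictAntiOn H E)
    (hHinv : ∀ x ∈ E, Hinv (H x) = x)
    (μ : ℝ) (hμ : μ ≠ 0)
    (a₁ b₁ c₁ a₂ b₂ c₂ : ℝ)
    (φ ψ : ℝ → ℝ)
    (hφ : ∀ x, φ x = a₁ + b₁ * Real.exp (μ * H x) + c₁ * Real.exp (-(μ * H x)))
    (hψ : ∀ x, ψ x = a₂ + b₂ * Real.exp (μ * H x) + c₂ * Real.exp (-(μ * H x))) :
    ∀ x ∈ E, ∀ y ∈ E, x < y →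
      (φ y - φ x) * deriv ψ (Hinv ((H x + H y) / 2)) =
      (ψ y - ψ x) * deriv φ (Hinv ((H x + H y) / 2)) := by
  intro x hx y hy hxy
  have hsub : Set.Icc x y ⊆ E := hEc.out hx hy
  have hcont : ContinuousOn H (Set.uIcc x y) := by
    rw [Set.uIcc_of_le hxy.le]
    exact fun z hz => ((hH z (hsub hz)).continuousAt).continuousWithinAt
  have ht : (H x + H y) / 2 ∈ Set.uIcc (H x) (H y) := by
    rcases le_total (H x) (H y) with h | h
    · rw [Set.uIcc_of_le h]; constructor <;> linarith
    · rw [Set.uIcc_of_ge h]; constructor <;> linarith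
  obtain ⟨m, hmI, hHm⟩ := intermediate_value_uIcc hcont ht
  have hmE : m ∈ E := hsub (by rwa [Set.uIcc_of_le hxy.le] at hmI)
  have hinvm : Hinv ((H x + H y) / 2) = m := by rw [← hHm, hHinv m hmE]
  rw [hinvm]
  set d := deriv H m with hd
  have hHd : HasDerivAt H d m := (hH m hmE).hasDerivAt
  have h1 : HasDerivAt (fun z => μ * H z) (μ * d) m := hHd.const_mul μ
  have h2 : HasDerivAt (fun z => Real.exp (μ * H z)) (Real.exp (μ * H m) * (μ * d)) m := h1.exp
  have h3 : HasDerivAt (fun z => Real.exp (-(μ * H z))) (Real.exp (-(μ * H m)) * (-(μ * d))) m :=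
    h1.neg.exp
  have hφe : φ = fun z => a₁ + b₁ * Real.exp (μ * H z) + c₁ * Real.exp (-(μ * H z)) :=
    funext hφ
  have hψe : ψ = fun z => a₂ + b₂ * Real.exp (μ * H z) + c₂ * Real.exp (-(μ * H z)) :=
    funext hψ
  have hφd : deriv φ m = b₁ * (Real.exp (μ * H m) * (μ * d)) + c₁ * (Real.exp (-(μ * H m)) * (-(μ * d))) := by
    rw [hφe]
    exact (((h2.const_mul b₁).const_add a₁).add (h3.const_mul c₁)).deriv
  have hψd : deriv ψ m = b₂ * (Real.exp (μ * H m) * (μ * d)) + c₂ * (Real.exp (-(μ * H m)) * (-(μ * d))) := by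
    rw [hψe]
    exact (((h2.const_mul b₂).const_add a₂).add (h3.const_mul c₂)).deriv
  rw [hφd, hψd, hφ, hφ, hψ, hψ]
  have hM2 : Real.exp (μ * H m) * Real.exp (μ * H m)
      = Real.exp (μ * H x) * Real.exp (μ * H y) := by
    rw [← Real.exp_add, ← Real.exp_add, hHm]; ring_nf
  rw [Real.exp_neg, Real.exp_neg, Real.exp_neg]
  have hP := Real.exp_pos (μ * H x)
  have hQ := Real.exp_pos (μ * H y)
  have hM := Real.exp_pos (μ * H m)
  field_simp
  linear_combination (Real.exp (μ * H y) - Real.exp (μ * H x)) * d * (c₂ * b₁ - c₁ * b₂) * hM2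
end

section
/- Let E ⊆ ℝ be open, H : E → ℝ differentiable strictly monotone, h(x,y) = H⁻¹((H(x)+H(y))/2). Then any pair φ, ψ ∈ span{1, H, H²} satisfies [φ(y)−φ(x)]ψ'(h(x,y)) = [ψ(y)−ψ(x)]φ'(h(x,y)) for all x < y in E. (Verification that case (b) of the main theorem gives solutions.) -/
lemma quad_deriv (H : ℝ → ℝ) (a b c : ℝ) (φ : ℝ → ℝ)
    (hφ : ∀ x, φ x = a + b * H x + c * (H x)^2) {m : ℝ}
    (hd : DifferentiableAt ℝ H m) :
    deriv φ m = (b + 2 * c * H m) * deriv H m := by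
  have hφf : φ = fun x => a + b * H x + c * (H x)^2 := funext hφ
  have hH' := hd.hasDerivAt
  have : HasDerivAt φ ((b + 2 * c * H m) * deriv H m) m := by
    rw [hφf]
    have h1 := ((hasDerivAt_const m a).add (hH'.const_mul b)).add
        ((hH'.pow 2).const_mul c)
    refine h1.congr_deriv ?_; push_cast; ring
  exact this.deriv

/-- Case (b) of the main theorem gives solutions. -/
theorem stmt_18 (E : Set ℝ) (hEo : IsOpen E) (hEc : E.OrdConnected) (hEne : E.Nonempty)
    (H Hinv : ℝ → ℝ)
    (hH : ∀ x ∈ E, DifferentiableAt ℝ H x)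
    (hHmono : StrictMonoOn H E ∨ StrictAntiOn H E)
    (hHinv : ∀ x ∈ E, Hinv (H x) = x)
    (a₁ b₁ c₁ a₂ b₂ c₂ : ℝ)
    (φ ψ : ℝ → ℝ)
    (hφ : ∀ x, φ x = a₁ + b₁ * H x + c₁ * (H x)^2)
    (hψ : ∀ x, ψ x = a₂ + b₂ * H x + c₂ * (H x)^2) :
    ∀ x ∈ E, ∀ y ∈ E, x < y →
      (φ y - φ x) * deriv ψ (Hinv ((H x + H y) / 2)) =
      (ψ y - ψ x) * deriv φ (Hinv ((H x + H y) / 2)) := by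
  intro x hx y hy hxy
  have hIcc : Set.Icc x y ⊆ E := hEc.out hx hy
  have hcont : ContinuousOn H (Set.uIcc x y) := by
    rw [Set.uIcc_of_le hxy.le]
    exact fun z hz => ((hH z (hIcc hz)).continuousAt).continuousWithinAt
  have hmid : (H x + H y) / 2 ∈ Set.uIcc (H x) (H y) := by
    rcases le_total (H x) (H y) with h | h <;>
      simp [Set.mem_uIcc] <;> [left; right] <;> constructor <;> linarith
  obtain ⟨z, hz, hzeq⟩ := intermediate_value_uIcc hcont hmid
  have hzE : z ∈ E := hIcc (by rwa [Set.uIcc_of_le hxy.le] at hz)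
  have hm : Hinv ((H x + H y) / 2) = z := by rw [← hzeq, hHinv z hzE]
  rw [hm]
  have hd := hH z hzE
  rw [quad_deriv H a₁ b₁ c₁ φ hφ hd, quad_deriv H a₂ b₂ c₂ ψ hψ hd,
    hφ x, hφ y, hψ x, hψ y, hzeq]
  ring
end
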